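/- In the skew X'(1+2) configuration, A is linearly spanned by {a, b, c, σ}; in particular dim_F A ≤ 4. -/

import Mathlib

/-- The `l`-eigenspace `A_l(a)` of the left multiplication operator `ad_a : v ↦ a * v`. -/
def eig (F : Type*) {A : Type*} [Field F] [NonUnitalNonAssocCommRing A]
    [Module F A] [SMulCommClass F A A] (a : A) (l : F) : Submodule F A where
  carrier := {v | a * v = l • v}
  add_mem' := by
    intro x y hx hy
    simp only [Set.mem_setOf_eq] at *
    rw [mul_add, hx, hy, smul_add]
  zero_mem' := by simp
  smul_mem' := by
    intro c x hx
    simp only [Set.mem_setOf_eq] at *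
    rw [mul_smul_comm, hx, smul_comm]

/-- `a` is a primitive axis for the Monster fusion law `M(α,β)`:  it is an idempotent,
the eigenspaces `A₁(a), A₀(a), A_α(a), A_β(a)` of `ad_a` decompose `A`
(they are automatically independent when `1, 0, α, β` are pairwise distinct),
`A₁(a) = F·a`, and products of eigenspaces obey the Monster fusion law `M(α,β)`. -/
structure IsMonsterAxis {F : Type*} [Field F] {A : Type*} [NonUnitalNonAssocCommRing A]
    [Module F A] [SMulCommClass F A A] [IsScalarTower F A A]
    (α β : F) (a : A) : Prop where
  idem : a * a = a
  semisimple : eig F a 1 ⊔ eig F a 0 ⊔ eig F a α ⊔ eig F a β = ⊤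
  primitive : eig F a 1 = Submodule.span F {a}
  mul00 : ∀ u ∈ eig F a 0, ∀ v ∈ eig F a 0, u * v ∈ eig F a 0
  mul0a : ∀ u ∈ eig F a 0, ∀ v ∈ eig F a α, u * v ∈ eig F a α
  mul0b : ∀ u ∈ eig F a 0, ∀ v ∈ eig F a β, u * v ∈ eig F a β
  mulaa : ∀ u ∈ eig F a α, ∀ v ∈ eig F a α, u * v ∈ eig F a 1 ⊔ eig F a 0
  mulab : ∀ u ∈ eig F a α, ∀ v ∈ eig F a β, u * v ∈ eig F a β
  mulbb : ∀ u ∈ eig F a β, ∀ v ∈ eig F a β, u * v ∈ eig F a 1 ⊔ eig F a 0 ⊔ eig F a α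

section Aux

variable {F : Type*} [Field F] {A : Type*} [NonUnitalNonAssocCommRing A]
    [Module F A] [SMulCommClass F A A]

/-- Cancellation of a nonzero scalar. -/
theorem smul_cancel0 {c : F} (hc : c ≠ 0) {x : A} (h : c • x = 0) : x = 0 := by
  have := congrArg (fun y => c⁻¹ • y) h
  simpa [smul_smul, inv_mul_cancel₀ hc] using this

/-- Directness of four eigenspaces with eigenvalues `1, 0, α, β`. -/
theorem dir4 {α β : F} (hα0 : α ≠ 0) (hα1 : α ≠ 1) (hβ0 : β ≠ 0) (hβ1 : β ≠ 1)
    (hαβ : α ≠ β) {a x1 x0 xa xb : A}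
    (h1 : a * x1 = x1) (h0 : a * x0 = 0) (hxa : a * xa = α • xa) (hxb : a * xb = β • xb)
    (hsum : x1 + x0 + xa + xb = 0) : x1 = 0 ∧ x0 = 0 ∧ xa = 0 ∧ xb = 0 := by
  have L1 : x1 + α • xa + β • xb = 0 := by
    have h := congrArg (fun y => a * y) hsum
    simpa [mul_add, h1, h0, hxa, hxb] using h
  have L2 : x1 + (α*α) • xa + (β*β) • xb = 0 := by
    have h := congrArg (fun y => a * y) L1
    simpa [mul_add, h1, h0, hxa, hxb, mul_smul_comm, smul_smul] using h
  have L3 : x1 + (α*α*α) • xa + (β*β*β) • xb = 0 := by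
    have h := congrArg (fun y => a * y) L2
    simpa [mul_add, h1, h0, hxa, hxb, mul_smul_comm, smul_smul, mul_assoc] using h
  have hxa0 : xa = 0 := by
    have key : (α * (α - 1) * (α - β)) • xa = 0 := by
      linear_combination (norm := module) β • L1 - (1+β) • L2 + L3
    exact smul_cancel0 (mul_ne_zero (mul_ne_zero hα0 (sub_ne_zero.mpr hα1))
      (sub_ne_zero.mpr hαβ)) key
  have hxb0 : xb = 0 := by
    have key : (β * (β - 1)) • xb = 0 := by
      rw [hxa0] at L1 L2
      linear_combination (norm := module) L2 - L1
    exact smul_cancel0 (mul_ne_zero hβ0 (sub_ne_zero.mpr hβ1)) key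
  have hx10 : x1 = 0 := by
    rw [hxa0, hxb0] at L1; simpa using L1
  refine ⟨hx10, ?_, hxa0, hxb0⟩
  rw [hx10, hxa0, hxb0] at hsum; simpa using hsum

/-- Coefficient extraction from a four-element spanning set. -/
theorem mem_span_quad {x a u w z : A} (h : x ∈ Submodule.span F ({a,u,w,z} : Set A)) :
    ∃ k1 k2 k3 k4 : F, x = k1•a + k2•u + k3•w + k4•z := by
  rw [Submodule.mem_span_insert] at h; obtain ⟨k1, x1, h1, rfl⟩ := h
  rw [Submodule.mem_span_insert] at h1; obtain ⟨k2, x2, h2, rfl⟩ := h1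
  rw [Submodule.mem_span_insert] at h2; obtain ⟨k3, x3, h3, rfl⟩ := h2
  rw [Submodule.mem_span_singleton] at h3; obtain ⟨k4, rfl⟩ := h3
  exact ⟨k1,k2,k3,k4, by module⟩

theorem mem_eig {a v : A} {l : F} : v ∈ eig F a l ↔ a * v = l • v := Iff.rfl

end Aux

/-- **Spanning set in the skew `X'(1+2)` configuration.**
With `σ := ab - β(a+b)`, the algebra `A` is linearly spanned by `{a, b, c, σ}`;
in particular `dim_F A ≤ 4`. -/
theorem skew_span
    {F : Type*} [Field F] {A : Type*} [NonUnitalNonAssocCommRing A]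
    [Module F A] [SMulCommClass F A A] [IsScalarTower F A A]
    (hchar : (2 : F) ≠ 0) {α β : F}
    (hα0 : α ≠ 0) (hα1 : α ≠ 1) (hβ0 : β ≠ 0) (hβ1 : β ≠ 1) (hαβ : α ≠ β)
    {a b c : A}
    (ha : IsMonsterAxis α β a) (hb : IsMonsterAxis α β b)
    (hJb : eig F b β = ⊥)
    (τ : A →ₗ[F] A)
    (hτfix : ∀ v ∈ eig F a 1 ⊔ eig F a 0 ⊔ eig F a α, τ v = v)
    (hτneg : ∀ v ∈ eig F a β, τ v = -v)
    (hc : c = τ b) (hskew : c ≠ b)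
    (hgen : NonUnitalAlgebra.adjoin F {a, b} = ⊤)
    {σ : A} (hσ : σ = a * b - β • (a + b))
    :
    Submodule.span F {a, b, c, σ} = ⊤ ∧ Module.finrank F A ≤ 4 := by
  classical
  -- ### Stage 1 : decomposition of `a` in the eigenspaces of `b`
  have hatop : a ∈ eig F b 1 ⊔ eig F b 0 ⊔ eig F b α ⊔ eig F b β := by
    rw [hb.semisimple]; trivial
  rw [hJb, sup_bot_eq] at hatop
  obtain ⟨y, hy, q, hq, hyq⟩ := Submodule.mem_sup.mp hatop
  obtain ⟨y1, hy1, p, hp, hy1p⟩ := Submodule.mem_sup.mp hy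
  rw [hb.primitive, Submodule.mem_span_singleton] at hy1
  obtain ⟨ν, rfl⟩ := hy1
  have hadec : a = ν • b + p + q := by rw [← hyq, ← hy1p]
  have hbb : b * b = b := hb.idem
  have hbp : b * p = 0 := by simpa using mem_eig.mp hp
  have hbq : b * q = α • q := mem_eig.mp hq
  -- q * q = e • b + r
  obtain ⟨y1', hy1', r, hr, hyr⟩ := Submodule.mem_sup.mp (hb.mulaa q hq q hq)
  rw [hb.primitive, Submodule.mem_span_singleton] at hy1'
  obtain ⟨e, rfl⟩ := hy1'
  have hqq : q * q = e • b + r := hyr.symm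
  have hbr : b * r = 0 := by simpa using mem_eig.mp hr
  have hbpp : b * (p * p) = 0 := by simpa using mem_eig.mp (hb.mul00 p hp p hp)
  have hbpq : b * (p * q) = α • (p * q) := mem_eig.mp (hb.mul0a p hp q hq)
  -- staged products
  have hab : a * b = ν • b + α • q := by
    conv_lhs => rw [hadec, add_mul, add_mul, smul_mul_assoc, hbb,
      mul_comm p b, hbp, mul_comm q b, hbq]
    module
  have hap : a * p = p*p + p*q := by
    conv_lhs => rw [hadec, add_mul, add_mul, smul_mul_assoc, hbp, mul_comm q p]
    module
  have haq : a * q = (ν*α) • q + p*q + (e • b + r) := by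
    conv_lhs => rw [hadec, add_mul, add_mul, smul_mul_assoc, hbq, hqq]
    module
  -- idempotence of a, expanded
  have hIdem : ν•(ν • b + α • q) + ((p*p + p*q) + ((ν*α) • q + p*q + (e • b + r)))
      = ν • b + p + q := by
    have expand : a * a = ν•(a*b) + (a*p + a*q) := by
      nth_rewrite 2 [hadec]
      rw [mul_add, mul_add, mul_smul_comm]
      abel
    rw [hab, hap, haq] at expand
    rw [← expand, ha.idem]
    exact hadec
  -- extract the α-component to get p*q
  have hx1 : b * ((ν*ν + e - 1*ν) • b) = (ν*ν + e - 1*ν) • b := by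
    rw [mul_smul_comm, hbb]
  have hx0 : b * (p*p + r - p) = 0 := by
    rw [mul_sub, mul_add, hbpp, hbr, hbp]; simp
  have hxa : b * ((2*(ν*α) - 1) • q + (2:F) • (p*q))
      = α • ((2*(ν*α) - 1) • q + (2:F) • (p*q)) := by
    rw [mul_add, mul_smul_comm, mul_smul_comm, hbq, hbpq]
    module
  have hxb : b * (0:A) = β • (0:A) := by simp
  have hsum0 : (ν*ν + e - 1*ν) • b + (p*p + r - p)
      + ((2*(ν*α) - 1) • q + (2:F) • (p*q)) + 0 = 0 := by
    linear_combination (norm := module) hIdem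
  obtain ⟨-, -, hPQ, -⟩ := dir4 hα0 hα1 hβ0 hβ1 hαβ hx1 hx0 hxa hxb hsum0
  have hpq : p * q = ((2:F)⁻¹ * (1 - 2*(ν*α))) • q := by
    have h2 : (2:F) • (p*q) = (1 - 2*(ν*α)) • q := by
      linear_combination (norm := module) hPQ
    calc p*q = (2:F)⁻¹ • ((2:F) • (p*q)) := by
          rw [smul_smul, inv_mul_cancel₀ hchar, one_smul]
      _ = (2:F)⁻¹ • ((1 - 2*(ν*α)) • q) := by rw [h2]
      _ = ((2:F)⁻¹ * (1 - 2*(ν*α))) • q := by rw [smul_smul]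
  have haq2 : a * q = e • b + (2:F)⁻¹ • q + r := by
    rw [haq, hpq]
    match_scalars <;> field_simp <;> ring
  -- ### Stage 2 : primitivity of `a` : the cubic operator maps into F·a
  have star : ∀ v : A, a*(a*(a*v)) - (α+β) • (a*(a*v)) + (α*β) • (a*v)
      ∈ Submodule.span F {a} := by
    set m : A →ₗ[F] A := LinearMap.mul F A a with hm
    set L : A →ₗ[F] A := (m ∘ₗ (m ∘ₗ m)) - (α+β) • (m ∘ₗ m) + (α*β) • m with hL
    have hLapp : ∀ v, L v = a*(a*(a*v)) - (α+β) • (a*(a*v)) + (α*β) • (a*v) := by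
      intro v; simp [hL, hm]
    have htop : eig F a 1 ⊔ eig F a 0 ⊔ eig F a α ⊔ eig F a β
        ≤ Submodule.comap L (Submodule.span F {a}) := by
      refine sup_le (sup_le (sup_le ?_ ?_) ?_) ?_ <;> intro v hv <;>
        rw [Submodule.mem_comap, hLapp]
      · have hv1 : a * v = v := by
          have h := mem_eig.mp hv; rwa [one_smul] at h
        have hvs : v ∈ Submodule.span F ({a} : Set A) := by rw [← ha.primitive]; exact hv
        rw [hv1, hv1, hv1]
        exact add_mem (sub_mem hvs (Submodule.smul_mem _ _ hvs)) (Submodule.smul_mem _ _ hvs)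
      · have hv0 : a * v = 0 := by simpa using mem_eig.mp hv
        rw [hv0]; simp
      · have hva : a * v = α • v := mem_eig.mp hv
        have hz : a*(a*(a*v)) - (α+β) • (a*(a*v)) + (α*β) • (a*v) = 0 := by
          simp only [hva, mul_smul_comm]
          module
        rw [hz]; simp
      · have hvb : a * v = β • v := mem_eig.mp hv
        have hz : a*(a*(a*v)) - (α+β) • (a*(a*v)) + (α*β) • (a*v) = 0 := by
          simp only [hvb, mul_smul_comm]
          module
        rw [hz]; simp
    intro v
    exact htop (by rw [ha.semisimple]; trivial)
  -- ### Stage 3 : the submodule W0 and its invariance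
  set W0 : Submodule F A := Submodule.span F ({a,b,q,r} : Set A) with hW0
  have haW : a ∈ W0 := Submodule.subset_span (by simp)
  have hbW : b ∈ W0 := Submodule.subset_span (by simp)
  have hqW : q ∈ W0 := Submodule.subset_span (by simp)
  have hrW : r ∈ W0 := Submodule.subset_span (by simp)
  have hspanA : Submodule.span F ({a} : Set A) ≤ W0 :=
    Submodule.span_mono (by simp)
  have habW : a * b ∈ W0 := by
    rw [hab]; exact add_mem (Submodule.smul_mem _ _ hbW) (Submodule.smul_mem _ _ hqW)
  have haqW : a * q ∈ W0 := by
    rw [haq2]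
    exact add_mem (add_mem (Submodule.smul_mem _ _ hbW) (Submodule.smul_mem _ _ hqW)) hrW
  have e2 : a*(a*b) = ν•(a*b) + α•(a*q) := by
    conv_lhs => rw [hab, mul_add, mul_smul_comm, mul_smul_comm]
  have e3 : a*(a*(a*b)) = ν•(a*(a*b)) + α•(a*(a*q)) := by
    conv_lhs => rw [e2, mul_add, mul_smul_comm, mul_smul_comm]
  have e4 : a*(a*q) = e•(a*b) + (2:F)⁻¹•(a*q) + a*r := by
    conv_lhs => rw [haq2, mul_add, mul_add, mul_smul_comm, mul_smul_comm]
  have haabW : a*(a*b) ∈ W0 := by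
    rw [e2]; exact add_mem (Submodule.smul_mem _ _ habW) (Submodule.smul_mem _ _ haqW)
  have haaabW : a*(a*(a*b)) ∈ W0 := by
    have hs := star b
    have hrw : a*(a*(a*b)) = (a*(a*(a*b)) - (α+β) • (a*(a*b)) + (α*β) • (a*b))
        + (α+β) • (a*(a*b)) - (α*β) • (a*b) := by abel
    rw [hrw]
    exact sub_mem (add_mem (hspanA hs) (Submodule.smul_mem _ _ haabW))
      (Submodule.smul_mem _ _ habW)
  have haaqW : a*(a*q) ∈ W0 := by
    have h : a*(a*q) = α⁻¹ • (a*(a*(a*b)) - ν•(a*(a*b))) := by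
      rw [e3]; match_scalars <;> field_simp <;> ring
    rw [h]
    exact Submodule.smul_mem _ _ (sub_mem haaabW (Submodule.smul_mem _ _ haabW))
  have harW : a * r ∈ W0 := by
    have h : a*r = a*(a*q) - e•(a*b) - (2:F)⁻¹•(a*q) := by rw [e4]; abel
    rw [h]
    exact sub_mem (sub_mem haaqW (Submodule.smul_mem _ _ habW)) (Submodule.smul_mem _ _ haqW)
  have amul : ∀ x ∈ W0, a * x ∈ W0 := by
    have hle : W0 ≤ Submodule.comap (LinearMap.mul F A a) W0 := by
      rw [hW0, Submodule.span_le]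
      rintro x (rfl | rfl | rfl | rfl) <;>
        simp only [SetLike.mem_coe, Submodule.mem_comap, LinearMap.mul_apply']
      · rw [ha.idem]; exact haW
      · exact habW
      · exact haqW
      · exact harW
    intro x hx
    simpa using hle hx
  have bmul : ∀ x ∈ W0, b * x ∈ W0 := by
    have hle : W0 ≤ Submodule.comap (LinearMap.mul F A b) W0 := by
      rw [hW0, Submodule.span_le]
      rintro x (rfl | rfl | rfl | rfl) <;>
        simp only [SetLike.mem_coe, Submodule.mem_comap, LinearMap.mul_apply']
      · rw [mul_comm]; exact habW
      · rw [hbb]; exact hbW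
      · rw [hbq]; exact Submodule.smul_mem _ _ hqW
      · rw [hbr]; exact zero_mem _
    intro x hx
    simpa using hle hx
  -- ### Stage 4 : decomposition of `b` in the eigenspaces of `a`
  have hbtop : b ∈ eig F a 1 ⊔ eig F a 0 ⊔ eig F a α ⊔ eig F a β := by
    rw [ha.semisimple]; trivial
  obtain ⟨y2, hy2, z, hz, hy2z⟩ := Submodule.mem_sup.mp hbtop
  obtain ⟨y3, hy3, w, hw, hy3w⟩ := Submodule.mem_sup.mp hy2
  obtain ⟨y4, hy4, u, hu, hy4u⟩ := Submodule.mem_sup.mp hy3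
  rw [ha.primitive, Submodule.mem_span_singleton] at hy4
  obtain ⟨lam, rfl⟩ := hy4
  have hbdec : b = lam • a + u + w + z := by rw [← hy2z, ← hy3w, ← hy4u]
  have hau : a * u = 0 := by simpa using mem_eig.mp hu
  have haw : a * w = α • w := mem_eig.mp hw
  have haz : a * z = β • z := mem_eig.mp hz
  have hab2 : a * b = lam • a + α • w + β • z := by
    conv_lhs => rw [hbdec, mul_add, mul_add, mul_add, mul_smul_comm, ha.idem, hau, haw, haz]
    module
  have haab2 : a*(a*b) = lam • a + (α*α) • w + (β*β) • z := by
    conv_lhs => rw [hab2, mul_add, mul_add, mul_smul_comm, mul_smul_comm, mul_smul_comm,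
      ha.idem, haw, haz]
    module
  have habW2 : a*b ∈ W0 := amul b hbW
  have haabW2 : a*(a*b) ∈ W0 := amul _ habW2
  have hwW : w ∈ W0 := by
    have hkey : (α*(β-α)) • w = β•(a*b) - a*(a*b) - (lam*(β-1)) • a := by
      rw [haab2, hab2]; module
    have hne : α*(β-α) ≠ 0 := mul_ne_zero hα0 (sub_ne_zero.mpr (Ne.symm hαβ))
    have hw' : w = (α*(β-α))⁻¹ • ((α*(β-α)) • w) := by
      rw [smul_smul, inv_mul_cancel₀ hne, one_smul]
    rw [hw', hkey]
    exact Submodule.smul_mem _ _ (sub_mem (sub_mem (Submodule.smul_mem _ _ habW2) haabW2)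
      (Submodule.smul_mem _ _ haW))
  have hzW : z ∈ W0 := by
    have hkey : (β*(α-β)) • z = α•(a*b) - a*(a*b) - (lam*(α-1)) • a := by
      rw [haab2, hab2]; module
    have hne : β*(α-β) ≠ 0 := mul_ne_zero hβ0 (sub_ne_zero.mpr hαβ)
    have hz' : z = (β*(α-β))⁻¹ • ((β*(α-β)) • z) := by
      rw [smul_smul, inv_mul_cancel₀ hne, one_smul]
    rw [hz', hkey]
    exact Submodule.smul_mem _ _ (sub_mem (sub_mem (Submodule.smul_mem _ _ habW2) haabW2)
      (Submodule.smul_mem _ _ haW))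
  have huW : u ∈ W0 := by
    have h : u = b - lam•a - w - z := by rw [hbdec]; abel
    rw [h]
    exact sub_mem (sub_mem (sub_mem hbW (Submodule.smul_mem _ _ haW)) hwW) hzW
  -- ### Stage 5 : W0 = span {a,u,w,z} =: V
  have haV : a ∈ Submodule.span F ({a,u,w,z} : Set A) := Submodule.subset_span (by simp)
  have huV : u ∈ Submodule.span F ({a,u,w,z} : Set A) := Submodule.subset_span (by simp)
  have hwV : w ∈ Submodule.span F ({a,u,w,z} : Set A) := Submodule.subset_span (by simp)
  have hzV : z ∈ Submodule.span F ({a,u,w,z} : Set A) := Submodule.subset_span (by simp)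
  have hbV : b ∈ Submodule.span F ({a,u,w,z} : Set A) := by
    rw [hbdec]
    exact add_mem (add_mem (add_mem (Submodule.smul_mem _ _ haV) huV) hwV) hzV
  have habV : a*b ∈ Submodule.span F ({a,u,w,z} : Set A) := by
    rw [hab2]
    exact add_mem (add_mem (Submodule.smul_mem _ _ haV) (Submodule.smul_mem _ _ hwV))
      (Submodule.smul_mem _ _ hzV)
  have haabV : a*(a*b) ∈ Submodule.span F ({a,u,w,z} : Set A) := by
    rw [haab2]
    exact add_mem (add_mem (Submodule.smul_mem _ _ haV) (Submodule.smul_mem _ _ hwV))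
      (Submodule.smul_mem _ _ hzV)
  have hqV : q ∈ Submodule.span F ({a,u,w,z} : Set A) := by
    have hq' : q = α⁻¹ • (a*b - ν • b) := by
      rw [hab]; match_scalars <;> field_simp <;> ring
    rw [hq']; exact Submodule.smul_mem _ _ (sub_mem habV (Submodule.smul_mem _ _ hbV))
  have haqV : a*q ∈ Submodule.span F ({a,u,w,z} : Set A) := by
    have h : a*q = α⁻¹ • (a*(a*b) - ν • (a*b)) := by
      rw [e2]; match_scalars <;> field_simp <;> ring
    rw [h]; exact Submodule.smul_mem _ _ (sub_mem haabV (Submodule.smul_mem _ _ habV))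
  have hrV : r ∈ Submodule.span F ({a,u,w,z} : Set A) := by
    have h : r = a*q - e•b - (2:F)⁻¹•q := by rw [haq2]; abel
    rw [h]
    exact sub_mem (sub_mem haqV (Submodule.smul_mem _ _ hbV)) (Submodule.smul_mem _ _ hqV)
  have hWleV : W0 ≤ Submodule.span F ({a,u,w,z} : Set A) := by
    rw [hW0, Submodule.span_le]
    rintro x (rfl | rfl | rfl | rfl)
    exacts [haV, hbV, hqV, hrV]
  -- ### Stage 6 : the products of u, w, z
  have hbuV : b*u ∈ Submodule.span F ({a,u,w,z} : Set A) := hWleV (bmul u huW)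
  have hbu : b*u = u*u + u*w + u*z := by
    conv_lhs => rw [hbdec, add_mul, add_mul, add_mul, smul_mul_assoc, hau,
      mul_comm w u, mul_comm z u]
    module
  obtain ⟨c1,c2,c3,c4, hcu⟩ := mem_span_quad hbuV
  have hd1 : a * (-(c1•a)) = -(c1•a) := by rw [mul_neg, mul_smul_comm, ha.idem]
  have hd0 : a * (u*u - c2•u) = 0 := by
    have h : a * (u*u) = 0 := by simpa using mem_eig.mp (ha.mul00 u hu u hu)
    rw [mul_sub, mul_smul_comm, hau, h]; simp
  have hda : a * (u*w - c3•w) = α • (u*w - c3•w) := by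
    have h : a * (u*w) = α • (u*w) := mem_eig.mp (ha.mul0a u hu w hw)
    rw [mul_sub, mul_smul_comm, haw, h]; module
  have hdb : a * (u*z - c4•z) = β • (u*z - c4•z) := by
    have h : a * (u*z) = β • (u*z) := mem_eig.mp (ha.mul0b u hu z hz)
    rw [mul_sub, mul_smul_comm, haz, h]; module
  have hds : -(c1•a) + (u*u - c2•u) + (u*w - c3•w) + (u*z - c4•z) = 0 := by
    have hcc : u*u + u*w + u*z = c1•a + c2•u + c3•w + c4•z := hbu.symm.trans hcu
    linear_combination (norm := module) hcc
  obtain ⟨-, hUU, hUW, hUZ⟩ := dir4 hα0 hα1 hβ0 hβ1 hαβ hd1 hd0 hda hdb hds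
  have huu : u*u = c2•u := sub_eq_zero.mp hUU
  have huw : u*w = c3•w := sub_eq_zero.mp hUW
  have huz : u*z = c4•z := sub_eq_zero.mp hUZ
  -- w products
  have hbwV : b*w ∈ Submodule.span F ({a,u,w,z} : Set A) := hWleV (bmul w hwW)
  have hbw : b*w = lam•(α•w) + u*w + w*w + w*z := by
    conv_lhs => rw [hbdec, add_mul, add_mul, add_mul, smul_mul_assoc, haw, mul_comm z w]
  obtain ⟨d1,d2,d3,d4, hcw⟩ := mem_span_quad hbwV
  obtain ⟨y5, hy5, y6, hy6, hyy⟩ := Submodule.mem_sup.mp (ha.mulaa w hw w hw)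
  have he1 : a * (y5 - d1•a) = y5 - d1•a := by
    have h : a*y5 = y5 := by have h2 := mem_eig.mp hy5; rwa [one_smul] at h2
    rw [mul_sub, mul_smul_comm, ha.idem, h]
  have he0 : a * (y6 - d2•u) = 0 := by
    have h : a*y6 = 0 := by simpa using mem_eig.mp hy6
    rw [mul_sub, mul_smul_comm, hau, h]; simp
  have hea : a * ((lam*α + c3 - d3)•w) = α • ((lam*α + c3 - d3)•w) := by
    rw [mul_smul_comm, haw]; module
  have heb : a * (w*z - d4•z) = β • (w*z - d4•z) := by
    have h : a * (w*z) = β • (w*z) := mem_eig.mp (ha.mulab w hw z hz)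
    rw [mul_sub, mul_smul_comm, haz, h]; module
  have hes : (y5 - d1•a) + (y6 - d2•u) + ((lam*α + c3 - d3)•w) + (w*z - d4•z) = 0 := by
    have H : lam•(α•w) + u*w + w*w + w*z = d1•a + d2•u + d3•w + d4•z := hbw.symm.trans hcw
    linear_combination (norm := module) H + hyy - huw
  obtain ⟨hE1, hE0, -, hEB⟩ := dir4 hα0 hα1 hβ0 hβ1 hαβ he1 he0 hea heb hes
  have hwz : w*z = d4•z := sub_eq_zero.mp hEB
  have hww : w*w = d1•a + d2•u := by
    rw [← hyy, sub_eq_zero.mp hE1, sub_eq_zero.mp hE0]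
  have hwwV : w*w ∈ Submodule.span F ({a,u,w,z} : Set A) := by
    rw [hww]; exact add_mem (Submodule.smul_mem _ _ haV) (Submodule.smul_mem _ _ huV)
  -- z products
  have hbzV : b*z ∈ Submodule.span F ({a,u,w,z} : Set A) := hWleV (bmul z hzW)
  have hbz : b*z = lam•(β•z) + u*z + w*z + z*z := by
    conv_lhs => rw [hbdec, add_mul, add_mul, add_mul, smul_mul_assoc, haz]
  have hzzV : z*z ∈ Submodule.span F ({a,u,w,z} : Set A) := by
    have h : z*z = b*z - lam•(β•z) - c4•z - d4•z := by rw [hbz, huz, hwz]; abel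
    rw [h]
    exact sub_mem (sub_mem (sub_mem hbzV (Submodule.smul_mem _ _ (Submodule.smul_mem _ _ hzV)))
      (Submodule.smul_mem _ _ hzV)) (Submodule.smul_mem _ _ hzV)
  -- ### Stage 7 : closure of V under multiplication
  have key : ∀ g : A, g*a ∈ Submodule.span F ({a,u,w,z} : Set A)
      → g*u ∈ Submodule.span F ({a,u,w,z} : Set A)
      → g*w ∈ Submodule.span F ({a,u,w,z} : Set A)
      → g*z ∈ Submodule.span F ({a,u,w,z} : Set A)
      → ∀ x ∈ Submodule.span F ({a,u,w,z} : Set A),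
          g*x ∈ Submodule.span F ({a,u,w,z} : Set A) := by
    intro g h1 h2 h3 h4 x hx
    have hle : Submodule.span F ({a,u,w,z} : Set A)
        ≤ Submodule.comap (LinearMap.mul F A g) (Submodule.span F ({a,u,w,z} : Set A)) := by
      rw [Submodule.span_le]
      rintro x (rfl | rfl | rfl | rfl) <;>
        simp only [SetLike.mem_coe, Submodule.mem_comap, LinearMap.mul_apply']
      exacts [h1, h2, h3, h4]
    simpa using hle hx
  have hKa : ∀ x ∈ Submodule.span F ({a,u,w,z} : Set A),
      a*x ∈ Submodule.span F ({a,u,w,z} : Set A) := by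
    refine key a ?_ ?_ ?_ ?_
    · rw [ha.idem]; exact haV
    · rw [hau]; exact zero_mem _
    · rw [haw]; exact Submodule.smul_mem _ _ hwV
    · rw [haz]; exact Submodule.smul_mem _ _ hzV
  have hKu : ∀ x ∈ Submodule.span F ({a,u,w,z} : Set A),
      u*x ∈ Submodule.span F ({a,u,w,z} : Set A) := by
    refine key u ?_ ?_ ?_ ?_
    · rw [mul_comm u a, hau]; exact zero_mem _
    · rw [huu]; exact Submodule.smul_mem _ _ huV
    · rw [huw]; exact Submodule.smul_mem _ _ hwV
    · rw [huz]; exact Submodule.smul_mem _ _ hzV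
  have hKw : ∀ x ∈ Submodule.span F ({a,u,w,z} : Set A),
      w*x ∈ Submodule.span F ({a,u,w,z} : Set A) := by
    refine key w ?_ ?_ ?_ ?_
    · rw [mul_comm w a, haw]; exact Submodule.smul_mem _ _ hwV
    · rw [mul_comm w u, huw]; exact Submodule.smul_mem _ _ hwV
    · exact hwwV
    · rw [hwz]; exact Submodule.smul_mem _ _ hzV
  have hKz : ∀ x ∈ Submodule.span F ({a,u,w,z} : Set A),
      z*x ∈ Submodule.span F ({a,u,w,z} : Set A) := by
    refine key z ?_ ?_ ?_ ?_
    · rw [mul_comm z a, haz]; exact Submodule.smul_mem _ _ hzV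
    · rw [mul_comm z u, huz]; exact Submodule.smul_mem _ _ hzV
    · rw [mul_comm z w, hwz]; exact Submodule.smul_mem _ _ hzV
    · exact hzzV
  have mulVV : ∀ x y : A, x ∈ Submodule.span F ({a,u,w,z} : Set A)
      → y ∈ Submodule.span F ({a,u,w,z} : Set A)
      → x*y ∈ Submodule.span F ({a,u,w,z} : Set A) := by
    intro x y hx hy
    have hle : Submodule.span F ({a,u,w,z} : Set A)
        ≤ Submodule.comap (LinearMap.mulRight F y) (Submodule.span F ({a,u,w,z} : Set A)) := by
      rw [Submodule.span_le]
      rintro g (rfl | rfl | rfl | rfl) <;>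
        simp only [SetLike.mem_coe, Submodule.mem_comap, LinearMap.mulRight_apply]
      exacts [hKa y hy, hKu y hy, hKw y hy, hKz y hy]
    simpa using hle hx
  -- ### Stage 8 : V = ⊤
  have hadj : NonUnitalAlgebra.adjoin F ({a, b} : Set A)
      ≤ (Submodule.span F ({a,u,w,z} : Set A)).toNonUnitalSubalgebra mulVV := by
    apply NonUnitalAlgebra.adjoin_le
    rintro x (rfl | rfl)
    · exact haV
    · exact hbV
  rw [hgen] at hadj
  have hVtop : Submodule.span F ({a,u,w,z} : Set A) = ⊤ := by
    rw [eq_top_iff]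
    intro x _
    exact Submodule.mem_toNonUnitalSubalgebra.mp (hadj (by trivial))
  -- ### Stage 9 : span {a,b,c,σ} = ⊤
  have haa1 : a ∈ eig F a 1 := by rw [mem_eig, ha.idem, one_smul]
  have hmem : lam•a + u + w ∈ eig F a 1 ⊔ eig F a 0 ⊔ eig F a α :=
    add_mem (add_mem (Submodule.mem_sup_left (Submodule.mem_sup_left
      (Submodule.smul_mem _ _ haa1)))
      (Submodule.mem_sup_left (Submodule.mem_sup_right hu))) (Submodule.mem_sup_right hw)
  have hcdec : c = lam • a + u + w - z := by
    rw [hc]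
    conv_lhs => rw [hbdec]
    rw [map_add, hτneg z hz, hτfix (lam • a + u + w) hmem, sub_eq_add_neg]
  have haS : a ∈ Submodule.span F ({a, b, c, σ} : Set A) := Submodule.subset_span (by simp)
  have hbS : b ∈ Submodule.span F ({a, b, c, σ} : Set A) := Submodule.subset_span (by simp)
  have hcS : c ∈ Submodule.span F ({a, b, c, σ} : Set A) := Submodule.subset_span (by simp)
  have hsS : σ ∈ Submodule.span F ({a, b, c, σ} : Set A) := Submodule.subset_span (by simp)
  have hzS : z ∈ Submodule.span F ({a, b, c, σ} : Set A) := by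
    have h2z : b - c = (2:F) • z := by rw [hbdec, hcdec]; module
    have h : z = (2:F)⁻¹ • (b - c) := by
      rw [h2z, smul_smul, inv_mul_cancel₀ hchar, one_smul]
    rw [h]; exact Submodule.smul_mem _ _ (sub_mem hbS hcS)
  have huwS : u + w ∈ Submodule.span F ({a, b, c, σ} : Set A) := by
    have h2 : b + c - (2*lam) • a = (2:F) • (u + w) := by rw [hbdec, hcdec]; module
    have h : u + w = (2:F)⁻¹ • (b + c - (2*lam) • a) := by
      rw [h2, smul_smul, inv_mul_cancel₀ hchar, one_smul]
    rw [h]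
    exact Submodule.smul_mem _ _ (sub_mem (add_mem hbS hcS) (Submodule.smul_mem _ _ haS))
  have hwS : w ∈ Submodule.span F ({a, b, c, σ} : Set A) := by
    have hkey : α • w = σ + β • (u + w) - (lam - β - β*lam) • a := by
      rw [hσ, hab2, hbdec]; module
    have h : w = α⁻¹ • (α • w) := by rw [smul_smul, inv_mul_cancel₀ hα0, one_smul]
    rw [h, hkey]
    exact Submodule.smul_mem _ _ (sub_mem (add_mem hsS (Submodule.smul_mem _ _ huwS))
      (Submodule.smul_mem _ _ haS))
  have huS : u ∈ Submodule.span F ({a, b, c, σ} : Set A) := by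
    have h : u = (u + w) - w := by abel
    rw [h]; exact sub_mem huwS hwS
  have hStop : Submodule.span F ({a, b, c, σ} : Set A) = ⊤ := by
    rw [eq_top_iff, ← hVtop, Submodule.span_le]
    rintro x (rfl | rfl | rfl | rfl)
    exacts [haS, huS, hwS, hzS]
  refine ⟨hStop, ?_⟩
  -- ### Stage 10 : the dimension bound
  have hrank : Module.rank F A ≤ 4 := by
    have h1 : Module.rank F A = Module.rank F (⊤ : Submodule F A) := (rank_top F A).symm
    rw [h1, ← hStop]
    refine le_trans (rank_span_le _) ?_
    have k1 : Cardinal.mk ↥({a,b,c,σ} : Set A) ≤ Cardinal.mk ↥({b,c,σ} : Set A) + 1 :=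
      Cardinal.mk_insert_le
    have k2 : Cardinal.mk ↥({b,c,σ} : Set A) ≤ Cardinal.mk ↥({c,σ} : Set A) + 1 :=
      Cardinal.mk_insert_le
    have k3 : Cardinal.mk ↥({c,σ} : Set A) ≤ Cardinal.mk ↥({σ} : Set A) + 1 :=
      Cardinal.mk_insert_le
    have k4 : Cardinal.mk ↥({σ} : Set A) = 1 := Cardinal.mk_singleton σ
    calc Cardinal.mk ↥({a,b,c,σ} : Set A) ≤ ((1 + 1) + 1) + 1 := by
          refine k1.trans (add_le_add_left (k2.trans (add_le_add_left
            (k3.trans (add_le_add_left (le_of_eq k4) 1)) 1)) 1)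
      _ = 4 := by norm_num
  exact Module.finrank_le_of_rank_le (by exact_mod_cast hrank)
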